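/- Let n ≥ 1 and let u : ℝⁿ × (0,∞) → ℝ be such that y ↦ u(y,t) is differentiable for every t > 0. Define Nu(x) = sup{ |u(y,t)| : y ∈ ℝⁿ, t > 0, |x−y| < t }, u⁺(x) = sup_{t>0} |u(x,t)|, and Gu(x) = sup{ t ‖∇_y u(y,t)‖ : y ∈ ℝⁿ, t > 0, |x−y| < 2t }, where ∇_y denotes the gradient in the first variable. Then for every s > 0 and every r with 0 < r ≤ 1, { x ∈ ℝⁿ : Nu(x) > s and Gu(x) ≤ s/r } ⊆ { x ∈ ℝⁿ : M(χ_{{u⁺ > s/2}})(x) > r^n / 4^n }. -/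

import Mathlib

open MeasureTheory Set
open scoped ENNReal

/-- The centered Hardy–Littlewood maximal function
`Mg(x) = sup_{R>0} (1/|B(x,R)|) ∫_{B(x,R)} |g(z)| dz` (as an `ℝ≥0∞`-valued function). -/
noncomputable def hlMax {n : ℕ} (g : EuclideanSpace ℝ (Fin n) → ℝ)
    (x : EuclideanSpace ℝ (Fin n)) : ℝ≥0∞ :=
  ⨆ (R : ℝ) (_ : 0 < R),
    (volume (Metric.ball x R))⁻¹ * ∫⁻ z in Metric.ball x R, ENNReal.ofReal |g z|

/-- The nontangential maximal function `Nu(x) = sup_{|x−y|<t} |u(y,t)|`. -/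
noncomputable def ntMax {n : ℕ} (u : EuclideanSpace ℝ (Fin n) → ℝ → ℝ)
    (x : EuclideanSpace ℝ (Fin n)) : ℝ≥0∞ :=
  ⨆ (y : EuclideanSpace ℝ (Fin n)) (t : ℝ) (_ : 0 < t) (_ : dist x y < t),
    ENNReal.ofReal |u y t|

/-- The radial maximal function `u⁺(x) = sup_{t>0} |u(x,t)|`. -/
noncomputable def radMax {n : ℕ} (u : EuclideanSpace ℝ (Fin n) → ℝ → ℝ)
    (x : EuclideanSpace ℝ (Fin n)) : ℝ≥0∞ :=
  ⨆ (t : ℝ) (_ : 0 < t), ENNReal.ofReal |u x t|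

/-- The nontangential gradient maximal function
`Gu(x) = sup_{|x−y|<2t} t ‖∇_y u(y,t)‖`. -/
noncomputable def gradMax {n : ℕ} (u : EuclideanSpace ℝ (Fin n) → ℝ → ℝ)
    (x : EuclideanSpace ℝ (Fin n)) : ℝ≥0∞ :=
  ⨆ (y : EuclideanSpace ℝ (Fin n)) (t : ℝ) (_ : 0 < t) (_ : dist x y < 2 * t),
    ENNReal.ofReal (t * ‖gradient (fun z => u z t) y‖)

/-- The set-inclusion step of the good-λ inequality:
`{Nu > s} ∩ {Gu ≤ s/r} ⊆ {M(χ_{{u⁺ > s/2}}) > rⁿ/4ⁿ}`. -/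
theorem stmt_13 (n : ℕ) (hn : 1 ≤ n)
    (u : EuclideanSpace ℝ (Fin n) → ℝ → ℝ)
    (hdiff : ∀ t : ℝ, 0 < t → Differentiable ℝ (fun y => u y t))
    (s r : ℝ) (hs : 0 < s) (hr0 : 0 < r) (hr1 : r ≤ 1) :
    {x | ENNReal.ofReal s < ntMax u x ∧ gradMax u x ≤ ENNReal.ofReal (s / r)} ⊆
      {x | ENNReal.ofReal (r ^ n / 4 ^ n) <
        hlMax (Set.indicator {z | ENNReal.ofReal (s / 2) < radMax u z}
          (fun _ => (1:ℝ))) x} := by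
  intro x hx
  obtain ⟨hN, hG⟩ := hx
  -- extract a point (y,t) in the cone with |u y t| > s
  rw [ntMax] at hN
  simp only [lt_iSup_iff] at hN
  obtain ⟨y, t, ht, hdxy, hq⟩ := hN
  set q : ℝ := |u y t| with hqdef
  have hq0 : 0 ≤ q := abs_nonneg _
  have hsq : s < q := by
    rwa [ENNReal.ofReal_lt_ofReal_iff_of_nonneg hs.le] at hq
  -- pick δ
  set δ : ℝ := min 1 (2 * (q - s) / s) with hδdef
  have hδ0 : 0 < δ := lt_min one_pos (div_pos (by linarith) hs)
  have hδ1 : δ ≤ 1 := min_le_left _ _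
  have hδ2 : s * δ / 2 ≤ q - s := by
    have h1 : δ ≤ 2 * (q - s) / s := min_le_right _ _
    have h2 : δ * s ≤ 2 * (q - s) := (le_div_iff₀ hs).mp h1
    linarith
  set ρ : ℝ := r * t * (1 + δ) / 2 with hρdef
  have hρ0 : 0 < ρ := by positivity
  have hρt : ρ ≤ t := by
    have h1 : r * (1 + δ) ≤ 2 := by nlinarith
    have h2 : r * (1 + δ) * t ≤ 2 * t := mul_le_mul_of_nonneg_right h1 ht.le
    rw [hρdef]; nlinarith
  set C : ℝ := s / (r * t) with hCdef
  have hC0 : 0 < C := by positivity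
  -- ball y ρ is inside the wider cone at x
  have hcone : ∀ w ∈ Metric.ball y ρ, dist x w < 2 * t := by
    intro w hw
    have h1 : dist x w ≤ dist x y + dist y w := dist_triangle x y w
    have h2 : dist y w < ρ := by rwa [Metric.mem_ball, dist_comm] at hw
    linarith
  -- gradient bound on the ball
  have hgrad : ∀ w ∈ Metric.ball y ρ, ‖fderiv ℝ (fun z => u z t) w‖ ≤ C := by
    intro w hw
    have hle : ENNReal.ofReal (t * ‖gradient (fun z => u z t) w‖)
        ≤ ENNReal.ofReal (s / r) := by
      refine le_trans ?_ hG
      rw [gradMax]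
      exact le_iSup_of_le w (le_iSup_of_le t (le_iSup_of_le ht
        (le_iSup_of_le (hcone w hw) le_rfl)))
    have hsr : 0 ≤ s / r := by positivity
    rw [ENNReal.ofReal_le_ofReal_iff hsr] at hle
    have hnorm : ‖gradient (fun z => u z t) w‖ = ‖fderiv ℝ (fun z => u z t) w‖ := by
      rw [gradient]
      exact LinearIsometryEquiv.norm_map _ _
    rw [← hnorm, hCdef]
    rw [le_div_iff₀ (by positivity), mul_comm r t]
    calc ‖gradient (fun z => u z t) w‖ * (t * r)
        = (t * ‖gradient (fun z => u z t) w‖) * r := by ring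
      _ ≤ (s / r) * r := by
          exact mul_le_mul_of_nonneg_right hle hr0.le
      _ = s := by field_simp
  -- on the ball, |u z t| > s/2
  have hball : ∀ z ∈ Metric.ball y ρ, s / 2 < |u z t| := by
    intro z hz
    have hmvt : ‖u z t - u y t‖ ≤ C * ‖z - y‖ :=
      (convex_ball y ρ).norm_image_sub_le_of_norm_fderiv_le
        (fun w _ => (hdiff t ht).differentiableAt) hgrad (Metric.mem_ball_self hρ0) hz
    have hzρ : ‖z - y‖ < ρ := by rwa [Metric.mem_ball, dist_eq_norm] at hz
    have h1 : C * ‖z - y‖ ≤ C * ρ := mul_le_mul_of_nonneg_left hzρ.le hC0.le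
    have hCρ : C * ρ = s * (1 + δ) / 2 := by
      rw [hCdef, hρdef]; field_simp
    have h2 : q ≤ ‖u z t - u y t‖ + |u z t| := by
      have := abs_sub_abs_le_abs_sub (u y t) (u z t)
      have h3 : |u y t - u z t| = ‖u z t - u y t‖ := by
        rw [abs_sub_comm]; rfl
      rw [← hqdef] at this
      linarith [this, h3 ▸ this]
    have := hmvt.trans h1
    rw [hCρ] at this
    nlinarith [abs_nonneg (u z t)]
  -- the ball is inside the level set of radMax
  have hsub1 : Metric.ball y ρ ⊆ {z | ENNReal.ofReal (s / 2) < radMax u z} := by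
    intro z hz
    have h1 : ENNReal.ofReal (s / 2) < ENNReal.ofReal |u z t| := by
      rw [ENNReal.ofReal_lt_ofReal_iff_of_nonneg (by positivity)]
      exact hball z hz
    refine h1.trans_le ?_
    rw [radMax]
    exact le_iSup_of_le t (le_iSup_of_le ht le_rfl)
  have hsub2 : Metric.ball y ρ ⊆ Metric.ball x (2 * t) := by
    intro z hz
    rw [Metric.mem_ball, dist_comm]
    exact hcone z hz
  -- lower bound the lintegral
  have h2t : (0:ℝ) < 2 * t := by linarith
  set g : EuclideanSpace ℝ (Fin n) → ℝ :=
    Set.indicator {z | ENNReal.ofReal (s / 2) < radMax u z} (fun _ => (1:ℝ)) with hgdef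
  have hint : volume (Metric.ball y ρ)
      ≤ ∫⁻ z in Metric.ball x (2 * t), ENNReal.ofReal |g z| := by
    calc volume (Metric.ball y ρ)
        = ∫⁻ _ in Metric.ball y ρ, 1 := (setLIntegral_one _).symm
      _ = ∫⁻ z in Metric.ball y ρ, ENNReal.ofReal |g z| := by
          refine setLIntegral_congr_fun measurableSet_ball ?_
          intro z hz
          beta_reduce
          rw [hgdef, Set.indicator_of_mem (hsub1 hz)]
          norm_num
      _ ≤ ∫⁻ z in Metric.ball x (2 * t), ENNReal.ofReal |g z| :=
          lintegral_mono_set hsub2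
  -- volumes
  have hfr := @finrank_euclideanSpace_fin ℝ _ n
  haveI : Nonempty (Fin n) := ⟨⟨0, hn⟩⟩
  haveI hnontriv : Nontrivial (EuclideanSpace ℝ (Fin n)) := inferInstance
  set V : ℝ≥0∞ := volume (Metric.ball (0 : EuclideanSpace ℝ (Fin n)) 1) with hVdef
  have hV0 : V ≠ 0 := (Metric.measure_ball_pos volume 0 one_pos).ne'
  have hVtop : V ≠ ⊤ := measure_ball_lt_top.ne
  have hvolx : volume (Metric.ball x (2 * t)) = ENNReal.ofReal ((2 * t) ^ n) * V := by
    rw [Measure.addHaar_ball volume x h2t.le, hfr]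
  have hvoly : volume (Metric.ball y ρ) = ENNReal.ofReal (ρ ^ n) * V := by
    rw [Measure.addHaar_ball volume y hρ0.le, hfr]
  -- reduce the goal to one term of the sup
  show ENNReal.ofReal (r ^ n / 4 ^ n) <
    ⨆ (R : ℝ) (_ : 0 < R),
      (volume (Metric.ball x R))⁻¹ * ∫⁻ z in Metric.ball x R, ENNReal.ofReal |g z|
  refine lt_of_lt_of_le ?_ (le_iSup_of_le (2 * t) (le_iSup_of_le h2t le_rfl))
  refine lt_of_lt_of_le ?_ (mul_le_mul_right hint _)
  rw [hvolx, hvoly]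
  have hA0 : ENNReal.ofReal ((2 * t) ^ n) ≠ 0 := by
    simp only [ne_eq, ENNReal.ofReal_eq_zero, not_le]
    positivity
  have hAtop : ENNReal.ofReal ((2 * t) ^ n) ≠ ⊤ := ENNReal.ofReal_ne_top
  have hrewrite : (ENNReal.ofReal ((2 * t) ^ n) * V)⁻¹ * (ENNReal.ofReal (ρ ^ n) * V)
      = ENNReal.ofReal (ρ ^ n) / ENNReal.ofReal ((2 * t) ^ n) := by
    rw [ENNReal.mul_inv (Or.inl hA0) (Or.inl hAtop)]
    rw [ENNReal.div_eq_inv_mul]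
    rw [mul_mul_mul_comm, ENNReal.inv_mul_cancel hV0 hVtop, mul_one]
  rw [hrewrite, ← ENNReal.ofReal_div_of_pos (by positivity)]
  rw [ENNReal.ofReal_lt_ofReal_iff_of_nonneg (by positivity)]
  have hkey : r ^ n / 4 ^ n = (r / 4) ^ n := (div_pow r 4 n).symm
  have hkey2 : ρ ^ n / (2 * t) ^ n = (ρ / (2 * t)) ^ n := (div_pow ρ (2 * t) n).symm
  rw [hkey, hkey2]
  have hρdiv : ρ / (2 * t) = r * (1 + δ) / 4 := by
    rw [hρdef]; field_simp; ring
  rw [hρdiv]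
  apply pow_lt_pow_left₀ _ (by positivity) (by omega)
  rw [div_lt_div_iff₀ (by norm_num) (by norm_num)]
  nlinarith
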